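/- Let C ⊆ ℝⁿ⁺¹ be a pointed closed semialgebraic convex cone with nonempty interior, and let C∨ = {ℓ ∈ ℝⁿ⁺¹ : ⟨ℓ, x⟩ ≥ 0 for all x ∈ C} be its dual cone. Let ℓ₀ ∈ frontier C∨ with ℓ₀ ≠ 0, and suppose there exists a polynomial p ∈ ℝ[x₀,…,xₙ] vanishing identically on frontier C∨ with ∇p(ℓ₀) ≠ 0. Then the face of C supported by ℓ₀ is an extreme ray: there exists x₀ ∈ C, x₀ ≠ 0, such that {x ∈ C : ⟨ℓ₀, x⟩ = 0} = {t • x₀ : t ≥ 0}, and x₀ spans an extreme ray of C. -/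

import Mathlib

open MvPolynomial

/-- A set is semialgebraic if it is a finite union of basic sets
`{x : p(x) = 0, q₁(x) > 0, …, q_m(x) > 0}`. -/
def IsSemialgebraic {n : ℕ} (S : Set (Fin n → ℝ)) : Prop :=
  ∃ (N : ℕ) (m : Fin N → ℕ)
    (p : Fin N → MvPolynomial (Fin n) ℝ)
    (q : (i : Fin N) → Fin (m i) → MvPolynomial (Fin n) ℝ),
    S = ⋃ i, {x | eval x (p i) = 0 ∧ ∀ j, 0 < eval x (q i j)}

/-- The vanishing ideal of a subset of ℝⁿ. -/
noncomputable def polyVanishingIdeal {n : ℕ} (T : Set (Fin n → ℝ)) : Ideal (MvPolynomial (Fin n) ℝ) where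
  carrier := {p | ∀ x ∈ T, eval x p = 0}
  add_mem' := by
    intro a b ha hb x hx
    simp [map_add, ha x hx, hb x hx]
  zero_mem' := by intro x hx; simp
  smul_mem' := by
    intro c p hp x hx
    simp [smul_eq_mul, hp x hx]

/-- The real zero set of an ideal of polynomials. -/
def realZeroSet {n : ℕ} (I : Ideal (MvPolynomial (Fin n) ℝ)) : Set (Fin n → ℝ) :=
  {x | ∀ p ∈ I, eval x p = 0}

/-- The gradient of a polynomial at a point. -/
noncomputable def grad {n : ℕ} (p : MvPolynomial (Fin n) ℝ) (z : Fin n → ℝ) : Fin n → ℝ :=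
  fun i => eval z (pderiv i p)

/-- The standard inner product on ℝⁿ. -/
def dot {n : ℕ} (a b : Fin n → ℝ) : ℝ := ∑ i, a i * b i

/-- The polar (dual convex body) of a set. -/
def polarBody {n : ℕ} (C : Set (Fin n → ℝ)) : Set (Fin n → ℝ) :=
  {ℓ | ∀ x ∈ C, -1 ≤ dot ℓ x}

/-- The dual cone of a set. -/
def dualCone {n : ℕ} (C : Set (Fin n → ℝ)) : Set (Fin n → ℝ) :=
  {ℓ | ∀ x ∈ C, 0 ≤ dot ℓ x}

/-- A pointed convex cone: convex, closed under nonnegative scaling, containing no line. -/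
def IsPointedCone {n : ℕ} (C : Set (Fin n → ℝ)) : Prop :=
  Convex ℝ C ∧ (∀ x ∈ C, ∀ t : ℝ, 0 ≤ t → t • x ∈ C) ∧ C ∩ (-C) = {0}

/-- A nonzero vector `v` spans an extreme ray of the cone `K` if whenever `y + z = v` with
`y, z ∈ K`, both `y` and `z` are nonnegative multiples of `v`. -/
def SpansExtremeRay {n : ℕ} (K : Set (Fin n → ℝ)) (v : Fin n → ℝ) : Prop :=
  v ≠ 0 ∧ v ∈ K ∧ ∀ y ∈ K, ∀ z ∈ K, y + z = v →
    (∃ t : ℝ, 0 ≤ t ∧ y = t • v) ∧ ∃ t : ℝ, 0 ≤ t ∧ z = t • v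

/-- The span of the gradients at `z` of the polynomials in `P`. -/
noncomputable def gradSpan {n : ℕ} (P : Ideal (MvPolynomial (Fin n) ℝ)) (z : Fin n → ℝ) :
    Submodule ℝ (Fin n → ℝ) :=
  Submodule.span ℝ {v | ∃ p ∈ P, v = grad p z}


namespace FaceAux
variable {m : ℕ}

variable {m : ℕ}

lemma dot_comm (a b : Fin m → ℝ) : dot a b = dot b a := by
  unfold dot; exact Finset.sum_congr rfl fun i _ => mul_comm _ _

lemma dot_add_left (a b c : Fin m → ℝ) : dot (a + b) c = dot a c + dot b c := by
  unfold dot; rw [← Finset.sum_add_distrib]; exact Finset.sum_congr rfl fun i _ => by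
    simp [add_mul]

lemma dot_sub_left (a b c : Fin m → ℝ) : dot (a - b) c = dot a c - dot b c := by
  unfold dot; rw [← Finset.sum_sub_distrib]; exact Finset.sum_congr rfl fun i _ => by
    simp [sub_mul]

lemma dot_smul_left (t : ℝ) (a c : Fin m → ℝ) : dot (t • a) c = t * dot a c := by
  unfold dot; rw [Finset.mul_sum]; exact Finset.sum_congr rfl fun i _ => by
    simp [mul_assoc]

lemma dot_add_right (a b c : Fin m → ℝ) : dot a (b + c) = dot a b + dot a c := by
  rw [dot_comm, dot_add_left, dot_comm b a, dot_comm c a]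

lemma dot_sub_right (a b c : Fin m → ℝ) : dot a (b - c) = dot a b - dot a c := by
  rw [dot_comm, dot_sub_left, dot_comm b a, dot_comm c a]

lemma dot_smul_right (t : ℝ) (a c : Fin m → ℝ) : dot a (t • c) = t * dot a c := by
  rw [dot_comm, dot_smul_left, dot_comm c a]

lemma dot_zero_left (a : Fin m → ℝ) : dot 0 a = 0 := by unfold dot; simp

lemma dot_zero_right (a : Fin m → ℝ) : dot a 0 = 0 := by unfold dot; simp

lemma dot_self_nonneg (a : Fin m → ℝ) : 0 ≤ dot a a :=
  Finset.sum_nonneg fun i _ => mul_self_nonneg _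

lemma dot_self_pos {a : Fin m → ℝ} (ha : a ≠ 0) : 0 < dot a a := by
  rcases (dot_self_nonneg a).lt_or_eq with h | h
  · exact h
  · exfalso; apply ha
    have h0 : ∀ i ∈ Finset.univ, a i * a i = 0 := by
      intro i _
      have := (Finset.sum_eq_zero_iff_of_nonneg (fun i _ => mul_self_nonneg (a i))).1 h.symm
      exact this i (Finset.mem_univ i)
    funext i
    have := h0 i (Finset.mem_univ i)
    exact mul_self_eq_zero.1 this

lemma abs_dot_le (a b : Fin m → ℝ) : |dot a b| ≤ (m : ℝ) * ‖a‖ * ‖b‖ := by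
  unfold dot
  calc |∑ i, a i * b i| ≤ ∑ i, |a i * b i| := Finset.abs_sum_le_sum_abs _ _
    _ ≤ ∑ _i : Fin m, ‖a‖ * ‖b‖ := by
        apply Finset.sum_le_sum
        intro i _
        rw [abs_mul]
        exact mul_le_mul (norm_le_pi_norm a i) (norm_le_pi_norm b i) (abs_nonneg _) (norm_nonneg _)
    _ = (m : ℝ) * ‖a‖ * ‖b‖ := by simp [Finset.sum_const, mul_assoc]

lemma norm_le_sum_abs (x : Fin m → ℝ) : ‖x‖ ≤ ∑ i, |x i| := by
  apply pi_norm_le_iff_of_nonneg (Finset.sum_nonneg fun i _ => abs_nonneg _) |>.2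
  intro i
  exact Finset.single_le_sum (fun j _ => abs_nonneg (x j)) (Finset.mem_univ i)



noncomputable def evalD (p : MvPolynomial (Fin m) ℝ) (z : Fin m → ℝ) : (Fin m → ℝ) →L[ℝ] ℝ :=
  ∑ i, (eval z (pderiv i p)) • (ContinuousLinearMap.proj i : (Fin m → ℝ) →L[ℝ] ℝ)

lemma evalD_apply (p : MvPolynomial (Fin m) ℝ) (z h : Fin m → ℝ) :
    evalD p z h = ∑ i, eval z (pderiv i p) * h i := by
  simp [evalD, ContinuousLinearMap.sum_apply, ContinuousLinearMap.smul_apply,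
    ContinuousLinearMap.proj_apply, smul_eq_mul]

lemma evalD_eq_dot (p : MvPolynomial (Fin m) ℝ) (z h : Fin m → ℝ) :
    evalD p z h = dot (grad p z) h := by
  rw [evalD_apply]; rfl

lemma hasFDerivAt_eval (p : MvPolynomial (Fin m) ℝ) (z : Fin m → ℝ) :
    HasFDerivAt (fun x => eval x p) (evalD p z) z := by
  induction p using MvPolynomial.induction_on with
  | C a =>
      have : evalD (C a : MvPolynomial (Fin m) ℝ) z = 0 := by
        ext h; simp [evalD_apply]
      rw [this]
      simpa using hasFDerivAt_const (a : ℝ) z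
  | add p q hp hq =>
      have : evalD (p + q) z = evalD p z + evalD q z := by
        ext h; simp [evalD_apply, Finset.sum_add_distrib, add_mul]
      rw [this]
      have := hp.add hq
      have hfun : (fun x : Fin m → ℝ => eval x (p + q)) = (fun x => eval x p) + (fun x => eval x q) := by
        ext x; simp
      rw [hfun]; exact this
  | mul_X p i hp =>
      have hXi : HasFDerivAt (fun x : Fin m → ℝ => x i)
          (ContinuousLinearMap.proj i : (Fin m → ℝ) →L[ℝ] ℝ) z :=
        (ContinuousLinearMap.proj i : (Fin m → ℝ) →L[ℝ] ℝ).hasFDerivAt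
      have hmul := hp.mul hXi
      have heq : evalD (p * X i) z =
          eval z p • (ContinuousLinearMap.proj i : (Fin m → ℝ) →L[ℝ] ℝ)
            + z i • evalD p z := by
        ext h
        simp only [ContinuousLinearMap.add_apply, ContinuousLinearMap.smul_apply,
          ContinuousLinearMap.proj_apply, smul_eq_mul, evalD_apply]
        have key : ∀ j, eval z (pderiv j (p * X i)) =
            eval z (pderiv j p) * z i + eval z p * (if j = i then 1 else 0) := by
          intro j
          rw [pderiv_mul]
          simp only [map_add, map_mul]
          congr 1
          · simp
          · rw [pderiv_X]
            simp [Pi.single_apply, eq_comm]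
        have h1 : ∑ j, eval z (pderiv j p) * z i * h j
            = z i * ∑ j, eval z (pderiv j p) * h j := by
          rw [Finset.mul_sum]
          exact Finset.sum_congr rfl fun j _ => by ring
        have h2 : ∑ j, (eval z p * (if j = i then 1 else 0)) * h j = eval z p * h i := by
          rw [Finset.sum_eq_single i]
          · simp
          · intro j _ hji; simp [hji]
          · intro hi; exact absurd (Finset.mem_univ i) hi
        calc ∑ j, eval z (pderiv j (p * X i)) * h j
            = ∑ j, (eval z (pderiv j p) * z i * h j
                + (eval z p * (if j = i then 1 else 0)) * h j) := by
              refine Finset.sum_congr rfl fun j _ => ?_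
              rw [key j]; ring
          _ = ∑ j, eval z (pderiv j p) * z i * h j
                + ∑ j, (eval z p * (if j = i then 1 else 0)) * h j :=
              Finset.sum_add_distrib
          _ = eval z p * h i + z i * ∑ j, eval z (pderiv j p) * h j := by
              rw [h1, h2]; ring
      rw [heq]
      have hfun : (fun x : Fin m → ℝ => eval x (p * X i)) = (fun x => eval x p) * (fun x => x i) := by
        ext x; simp
      rw [hfun]; exact hmul


lemma real_inner_eq_dot (x y : EuclideanSpace ℝ (Fin m)) : (inner ℝ x y : ℝ) = dot x y := by
  simp [PiLp.inner_apply, RCLike.inner_apply, dot, mul_comm]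

lemma zero_mem_of_pointed {C : Set (Fin m → ℝ)} (hc : IsPointedCone C) : (0 : Fin m → ℝ) ∈ C := by
  have h := hc.2.2
  have : (0 : Fin m → ℝ) ∈ C ∩ (-C) := by rw [h]; rfl
  exact this.1

lemma add_mem_of_pointed {C : Set (Fin m → ℝ)} (hc : IsPointedCone C) {x y : Fin m → ℝ}
    (hx : x ∈ C) (hy : y ∈ C) : x + y ∈ C := by
  have hmid : (1/2 : ℝ) • x + (1/2 : ℝ) • y ∈ C :=
    hc.1 hx hy (by norm_num) (by norm_num) (by norm_num)
  have h2 := hc.2.1 _ hmid 2 (by norm_num)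
  have : (2:ℝ) • ((1/2 : ℝ) • x + (1/2 : ℝ) • y) = x + y := by
    rw [smul_add, smul_smul, smul_smul]; norm_num
  rwa [this] at h2

lemma dualCone_convex (C : Set (Fin m → ℝ)) : Convex ℝ (dualCone C) := by
  intro a ha b hb s t hs ht _
  intro x hx
  have : dot (s • a + t • b) x = s * dot a x + t * dot b x := by
    unfold dot
    rw [Finset.mul_sum, Finset.mul_sum, ← Finset.sum_add_distrib]
    refine Finset.sum_congr rfl fun i _ => ?_
    simp [Pi.add_apply, Pi.smul_apply, smul_eq_mul]; ring
  rw [this]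
  exact add_nonneg (mul_nonneg hs (ha x hx)) (mul_nonneg ht (hb x hx))

lemma zero_mem_dualCone (C : Set (Fin m → ℝ)) : (0 : Fin m → ℝ) ∈ dualCone C := by
  intro x hx; simp [dot]

/-- The dual cone of a pointed closed cone has nonempty interior. -/
lemma interior_dualCone_nonempty {C : Set (Fin m → ℝ)} (hcl : IsClosed C)
    (hc : IsPointedCone C) : (interior (dualCone C)).Nonempty := by
  by_contra hemp
  rw [Set.not_nonempty_iff_eq_empty] at hemp
  -- work in EuclideanSpace
  set E := EuclideanSpace ℝ (Fin m)
  set φ : E ≃L[ℝ] (Fin m → ℝ) := EuclideanSpace.equiv (Fin m) ℝ with hφ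
  set Dset : Set E := φ ⁻¹' dualCone C with hDset
  have hconv : Convex ℝ Dset :=
    (dualCone_convex C).linear_preimage (φ : E →L[ℝ] (Fin m → ℝ)).toLinearMap
  have h0D : (0 : E) ∈ Dset := by
    show φ 0 ∈ dualCone C
    rw [map_zero]; exact zero_mem_dualCone C
  have haff : affineSpan ℝ Dset ≠ ⊤ := by
    intro htop
    have := (hconv.interior_nonempty_iff_affineSpan_eq_top).2 htop
    have hintE : interior Dset = ∅ := by
      have h := φ.toHomeomorph.preimage_interior (dualCone C)
      rw [hemp, Set.preimage_empty] at h
      exact h.symm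
    rw [hintE] at this
    exact Set.not_nonempty_empty this
  set V : Submodule ℝ E := (affineSpan ℝ Dset).direction with hV
  have hVne : V ≠ ⊤ := by
    intro htop
    apply haff
    have hne : ((affineSpan ℝ Dset : AffineSubspace ℝ E) : Set E).Nonempty :=
      ⟨0, subset_affineSpan ℝ Dset h0D⟩
    exact (AffineSubspace.direction_eq_top_iff_of_nonempty hne).1 htop
  have hVorth : Vᗮ ≠ ⊥ := by
    intro hbot
    exact hVne (Submodule.orthogonal_eq_bot_iff.1 hbot)
  obtain ⟨u, huV, hune⟩ := Submodule.exists_mem_ne_zero_of_ne_bot hVorth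
  have hDV : ∀ l ∈ Dset, l ∈ V := by
    intro l hl
    have := AffineSubspace.vsub_mem_direction (subset_affineSpan ℝ Dset hl)
      (subset_affineSpan ℝ Dset h0D)
    rwa [vsub_eq_sub, sub_zero] at this
  -- the bipolar theorem
  let K : ProperCone ℝ E :=
    { carrier := φ ⁻¹' C
      zero_mem' := by
        show φ 0 ∈ C
        rw [map_zero]; exact zero_mem_of_pointed hc
      smul_mem' := fun c x hx => by
        show φ ((c : ℝ) • x) ∈ C
        rw [map_smul]; exact hc.2.1 _ hx c c.2
      add_mem' := fun {x y} hx hy => by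
        show φ (x + y) ∈ C
        rw [map_add]; exact add_mem_of_pointed hc hx hy
      isClosed' := hcl.preimage φ.continuous }
  have hbipolar := ProperCone.innerDual_innerDual K
  have hdual_eq : ((ProperCone.innerDual (K : Set E)) : Set E) = Dset := by
    ext y
    rw [SetLike.mem_coe, ProperCone.mem_innerDual]
    constructor
    · intro h x hx
      have := h (show φ.symm x ∈ (K : Set E) from by
        show φ (φ.symm x) ∈ C
        rw [ContinuousLinearEquiv.apply_symm_apply]; exact hx)
      rw [real_inner_eq_dot, dot_comm] at this
      exact this
    · intro h x hx
      rw [real_inner_eq_dot, dot_comm]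
      exact h (φ x) hx
  have huC : ∀ v : E, v ∈ Vᗮ → φ v ∈ C := by
    intro v hv
    have : v ∈ ProperCone.innerDual ((ProperCone.innerDual (K : Set E)) : Set E) := by
      rw [ProperCone.mem_innerDual]
      intro x hx
      rw [hdual_eq] at hx
      have := (Submodule.mem_orthogonal _ _).1 hv x (hDV x hx)
      rw [this]
    rw [hbipolar] at this
    exact this
  have hu1 : φ u ∈ C := huC u huV
  have hu2 : φ (-u) ∈ C := huC (-u) (neg_mem huV)
  have : φ u ∈ C ∩ (-C) := ⟨hu1, by rw [Set.mem_neg]; simpa using hu2⟩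
  rw [hc.2.2] at this
  exact hune (φ.injective (by rw [map_zero]; exact this))



lemma sign_mul_self (t : ℝ) : Real.sign t * t = |t| := by
  rcases lt_trichotomy t 0 with h | h | h
  · rw [Real.sign_of_neg h, abs_of_neg h]; ring
  · simp [h]
  · rw [Real.sign_of_pos h, abs_of_pos h]; ring

lemma abs_sign_le_one (t : ℝ) : |Real.sign t| ≤ 1 := by
  rcases lt_trichotomy t 0 with h | h | h
  · rw [Real.sign_of_neg h]; norm_num
  · simp [h, Real.sign_zero]
  · rw [Real.sign_of_pos h]; norm_num

lemma exists_pos_functional_of_interior {C : Set (Fin m → ℝ)}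
    (hint : (interior (dualCone C)).Nonempty) :
    ∃ (e : Fin m → ℝ) (δ : ℝ), 0 < δ ∧ ∀ x ∈ C, δ * ‖x‖ ≤ dot e x := by
  obtain ⟨e, he⟩ := hint
  rw [mem_interior_iff_mem_nhds, Metric.mem_nhds_iff] at he
  obtain ⟨r, hr, hball⟩ := he
  refine ⟨e, r/2, by linarith, ?_⟩
  intro x hx
  set v : Fin m → ℝ := fun i => -(r/2) * Real.sign (x i) with hv
  have hvnorm : ‖v‖ ≤ r/2 := by
    apply pi_norm_le_iff_of_nonneg (by linarith) |>.2
    intro i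
    rw [hv]
    simp only [Real.norm_eq_abs, abs_mul, abs_neg]
    calc |r/2| * |Real.sign (x i)| ≤ |r/2| * 1 :=
          mul_le_mul_of_nonneg_left (abs_sign_le_one _) (abs_nonneg _)
      _ = r/2 := by rw [mul_one, abs_of_pos (by linarith)]
  have hmem : e + v ∈ dualCone C := by
    apply hball
    rw [Metric.mem_ball, dist_eq_norm, add_sub_cancel_left]
    linarith [hvnorm]
  have h0 : 0 ≤ dot (e + v) x := hmem x hx
  rw [dot_add_left] at h0
  have hvx : dot v x = -(r/2) * ∑ i, |x i| := by
    unfold dot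
    rw [hv, Finset.mul_sum]
    refine Finset.sum_congr rfl fun i _ => ?_
    have := sign_mul_self (x i)
    simp only []
    rw [mul_assoc, this]
  rw [hvx] at h0
  have : (r/2) * ∑ i, |x i| ≤ dot e x := by linarith
  calc r/2 * ‖x‖ ≤ r/2 * ∑ i, |x i| :=
        mul_le_mul_of_nonneg_left (norm_le_sum_abs x) (by linarith)
    _ ≤ dot e x := this


lemma continuous_dot_right (x : Fin m → ℝ) : Continuous (fun l : Fin m → ℝ => dot l x) := by
  unfold dot
  exact continuous_finset_sum _ fun i _ => (continuous_apply i).mul continuous_const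

lemma dualCone_isClosed (C : Set (Fin m → ℝ)) : IsClosed (dualCone C) := by
  have : dualCone C = ⋂ x ∈ C, {l : Fin m → ℝ | 0 ≤ dot l x} := by
    ext l; simp [dualCone, Set.mem_iInter]
  rw [this]
  exact isClosed_biInter fun x _ => isClosed_le continuous_const (continuous_dot_right x)

/-- If `dot e x ≥ δ‖x‖` on `C` then `e` is in the interior of the dual cone. -/
lemma mem_interior_dualCone {C : Set (Fin m → ℝ)} {e : Fin m → ℝ} {δ : ℝ} (hδ : 0 < δ)
    (h : ∀ x ∈ C, δ * ‖x‖ ≤ dot e x) : e ∈ interior (dualCone C) := by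
  rw [mem_interior]
  refine ⟨Metric.ball e (δ / (m + 1)), ?_, Metric.isOpen_ball,
    Metric.mem_ball_self (by positivity)⟩
  intro l hl x hx
  rw [Metric.mem_ball, dist_eq_norm] at hl
  have h1 : dot l x = dot e x + dot (l - e) x := by
    rw [dot_sub_left]; ring
  have h2 : |dot (l - e) x| ≤ (m : ℝ) * ‖l - e‖ * ‖x‖ := abs_dot_le _ _
  have h3 : (m : ℝ) * ‖l - e‖ * ‖x‖ ≤ (m : ℝ) * (δ / (m+1)) * ‖x‖ := by
    apply mul_le_mul_of_nonneg_right _ (norm_nonneg _)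
    exact mul_le_mul_of_nonneg_left hl.le (Nat.cast_nonneg m)
  have h4 : (m : ℝ) * (δ / (m+1)) * ‖x‖ ≤ δ * ‖x‖ := by
    apply mul_le_mul_of_nonneg_right _ (norm_nonneg _)
    rw [div_eq_mul_inv]
    have hm1 : (0:ℝ) < (m:ℝ) + 1 := by positivity
    rw [mul_comm (m:ℝ) _, mul_assoc]
    nth_rewrite 2 [← mul_one δ]
    apply mul_le_mul_of_nonneg_left _ hδ.le
    rw [inv_mul_le_iff₀ hm1]
    linarith
  have := h x hx
  have habs := abs_le.1 h2
  linarith [habs.1]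

/-- The face supported by a frontier point of the dual cone is nonzero. -/
lemma face_nonzero {C : Set (Fin m → ℝ)} (hclosed : IsClosed C)
    (hcone : ∀ x ∈ C, ∀ t : ℝ, 0 ≤ t → t • x ∈ C)
    {l0 : Fin m → ℝ} (hl0 : l0 ∈ frontier (dualCone C)) :
    ∃ x ∈ C, x ≠ 0 ∧ dot l0 x = 0 := by
  have hl0D : l0 ∈ dualCone C := by
    have := hl0.1
    rwa [(dualCone_isClosed C).closure_eq] at this
  by_contra hcon
  push_neg at hcon
  have hpos : ∀ x ∈ C, x ≠ 0 → 0 < dot l0 x := by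
    intro x hx hxne
    rcases (hl0D x hx).lt_or_eq with h | h
    · exact h
    · exact absurd h.symm (hcon x hx hxne)
  by_cases hK : (C ∩ Metric.sphere 0 1).Nonempty
  · -- compact minimum argument
    have hcomp : IsCompact (C ∩ Metric.sphere 0 1) :=
      (isCompact_sphere (0 : Fin m → ℝ) 1).inter_left hclosed
    obtain ⟨y0, hy0, hy0min⟩ := hcomp.exists_isMinOn hK
      ((continuous_dot_right l0).continuousOn)
    set δ := dot l0 y0 with hδdef
    have hy0C : y0 ∈ C := hy0.1
    have hy0ne : y0 ≠ 0 := by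
      intro h0
      have := hy0.2
      rw [h0, mem_sphere_iff_norm] at this
      simp at this
    have hδpos : 0 < δ := hpos y0 hy0C hy0ne
    have hlow : ∀ x ∈ C, δ * ‖x‖ ≤ dot l0 x := by
      intro x hx
      by_cases hx0 : x = 0
      · subst hx0; simp [dot]
      · have hnx : 0 < ‖x‖ := norm_pos_iff.2 hx0
        set y := ‖x‖⁻¹ • x with hy
        have hyC : y ∈ C := hcone x hx _ (by positivity)
        have hyS : y ∈ Metric.sphere (0 : Fin m → ℝ) 1 := by
          rw [mem_sphere_iff_norm, sub_zero, hy, norm_smul]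
          simp [abs_of_pos (inv_pos.2 hnx), inv_mul_cancel₀ hnx.ne']
        have hmin : δ ≤ dot l0 y := by
          have := hy0min ⟨hyC, hyS⟩
          simp only [Set.mem_setOf_eq] at this
          rw [hδdef, dot_comm l0 y0, dot_comm l0 y]
          exact this
        have hxy : x = ‖x‖ • y := by
          rw [hy, smul_smul, mul_inv_cancel₀ hnx.ne', one_smul]
        calc δ * ‖x‖ = ‖x‖ * δ := mul_comm _ _
          _ ≤ ‖x‖ * dot l0 y := mul_le_mul_of_nonneg_left hmin hnx.le
          _ = dot l0 x := by rw [← dot_smul_right, ← hxy]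
    have : l0 ∈ interior (dualCone C) := mem_interior_dualCone hδpos hlow
    exact hl0.2 this
  · -- C ⊆ {0}, so dualCone C = univ and frontier is empty
    have hC0 : C ⊆ {0} := by
      intro x hx
      by_contra hxne
      apply hK
      refine ⟨‖x‖⁻¹ • x, hcone x hx _ (by positivity), ?_⟩
      rw [mem_sphere_iff_norm, sub_zero, norm_smul]
      have : x ≠ 0 := hxne
      simp [norm_ne_zero_iff.2 this]
    have : dualCone C = Set.univ := by
      ext l
      simp only [Set.mem_univ, iff_true]
      intro x hx
      have := hC0 hx
      simp only [Set.mem_singleton_iff] at this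
      subst this
      simp [dot]
    rw [this, frontier_univ] at hl0
    exact hl0
section AlgHelpers
lemma alg_slb {s t a b : ℝ} (hs0 : 0 ≤ s) (ht1 : t ≤ 1) (_ht0 : 0 < t) (ha : 0 < a)
    (hb : 0 < b) (h : 0 ≤ -(1-s)*t*a + s*b) : a/(b+a)*t ≤ s := by
  rw [div_mul_eq_mul_div, div_le_iff₀ (by linarith)]
  nlinarith [mul_le_mul_of_nonneg_left ht1 (mul_nonneg hs0 ha.le)]

lemma alg_ball {r E : ℝ} (hr : 0 < r) (hE : 0 ≤ E) : r / (2*(E+1)) * E < r := by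
  rw [div_mul_eq_mul_div, div_lt_iff₀ (by linarith)]
  nlinarith

lemma alg_ub {ε t L W Ey δ ny mw : ℝ} (hε0 : 0 < ε) (hε1 : ε ≤ 1) (ht0 : 0 < t)
    (hL : 0 ≤ L) (hEy : δ * ny ≤ Ey) (hW2 : W ≤ mw*ny) (h4 : t*(mw+1) ≤ ε*δ)
    (hny : 0 ≤ ny) (hmw : 0 ≤ mw) : 0 ≤ (1-ε)*L - (1-ε)*t*W + ε*Ey := by
  have h1e : (0:ℝ) ≤ 1 - ε := by linarith
  have e1 : (1-ε)*t*W ≤ (1-ε)*t*(mw*ny) :=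
    mul_le_mul_of_nonneg_left hW2 (mul_nonneg h1e ht0.le)
  have e2 : (1-ε)*t*(mw*ny) ≤ t*(mw*ny) := by
    apply mul_le_mul_of_nonneg_right _ (mul_nonneg hmw hny)
    nlinarith
  have e3 : t*(mw*ny) ≤ ε*δ*ny := by
    have : t*mw ≤ ε*δ := by nlinarith
    calc t*(mw*ny) = (t*mw)*ny := by ring
      _ ≤ (ε*δ)*ny := mul_le_mul_of_nonneg_right this hny
  have e4 : ε*(δ*ny) ≤ ε*Ey := mul_le_mul_of_nonneg_left hEy hε0.le
  have e5 : 0 ≤ (1-ε)*L := mul_nonneg h1e hL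
  nlinarith [e1, e2, e3, e4, e5]

lemma alg_half {t d W : ℝ} (h : t ≤ d/(2*(W+1))) (hW : 0 ≤ W) (hd : 0 < d) (ht : 0 ≤ t) :
    t*W ≤ d/2 := by
  have : t*W ≤ d/(2*(W+1))*W := mul_le_mul_of_nonneg_right h hW
  calc t*W ≤ d/(2*(W+1))*W := this
    _ ≤ d/2 := by
        rw [div_mul_eq_mul_div, div_le_div_iff₀ (by positivity) (by norm_num)]
        nlinarith

lemma alg_half' {s d E : ℝ} (h : s ≤ d/(2*(E+1))) (hE : 0 ≤ E) (hd : 0 < d) (hs : 0 ≤ s) :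
    s*E < d/2 := by
  have h1 : s*E ≤ d/(2*(E+1))*E := mul_le_mul_of_nonneg_right h hE
  have h2 : d/(2*(E+1))*E < d/2 := by
    rw [div_mul_eq_mul_div, div_lt_div_iff₀ (by positivity) (by norm_num)]
    nlinarith
  linarith
end AlgHelpers

set_option maxHeartbeats 1600000 in
/-- Crux: a nonzero element of the face supported by a regular point `l0` is parallel
to the gradient. -/
lemma parallel_of_mem_face {C : Set (Fin m → ℝ)} {e : Fin m → ℝ} {δ : ℝ} (hδ : 0 < δ)
    (he : ∀ y ∈ C, δ * ‖y‖ ≤ dot e y)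
    {l0 : Fin m → ℝ} (hl0 : l0 ∈ frontier (dualCone C))
    {p : MvPolynomial (Fin m) ℝ} (hp : ∀ l ∈ frontier (dualCone C), eval l p = 0)
    {x : Fin m → ℝ} (hx : x ∈ C) (hxne : x ≠ 0) (hface : dot l0 x = 0)
    (hgne : grad p l0 ≠ 0) (hc0 : dot (grad p l0) (e - l0) ≠ 0) :
    ∃ c : ℝ, x = c • grad p l0 := by
  set D := dualCone C with hD
  set g := grad p l0 with hg
  have hDcl : IsClosed D := dualCone_isClosed C
  have hl0D : l0 ∈ D := by
    have := hl0.1; rwa [hDcl.closure_eq] at this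
  have hgg : 0 < dot g g := dot_self_pos hgne
  set c : ℝ := dot x g / dot g g with hc
  set w : Fin m → ℝ := x - c • g with hw
  by_cases hw0 : w = 0
  · exact ⟨c, by rw [← sub_eq_zero]; exact hw0⟩
  exfalso
  have hwg : dot w g = 0 := by
    rw [hw, dot_sub_left, dot_smul_left, hc]
    field_simp
    ring
  have hgw : dot g w = 0 := by rw [dot_comm]; exact hwg
  have hxw : x = w + c • g := by rw [hw]; abel
  set a := dot w x with ha
  have hapos : 0 < a := by
    have : dot w x = dot w w + c * dot w g := by
      rw [hxw, dot_add_right, dot_smul_right]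
    rw [ha, this, hwg, mul_zero, add_zero]
    exact dot_self_pos hw0
  set β := dot e x with hβ
  have hβpos : 0 < β := by
    have h1 := he x hx
    have h2 : 0 < ‖x‖ := norm_pos_iff.2 hxne
    calc (0:ℝ) < δ * ‖x‖ := by positivity
      _ ≤ β := h1
  have heD : e ∈ D := by
    intro y hy
    calc (0:ℝ) ≤ δ * ‖y‖ := by positivity
      _ ≤ dot e y := he y hy
  set c₀ := dot g (e - l0) with hc₀
  set En := ‖e - l0‖ with hEn
  have hEnn : 0 ≤ En := norm_nonneg _
  set c₁ : ℝ := a / (β + a) with hc₁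
  have hc₁pos : 0 < c₁ := by rw [hc₁]; positivity
  have hc₁le : c₁ ≤ 1 := by
    rw [hc₁, div_le_one (by linarith)]; linarith
  set K : ℝ := ‖w‖ / c₁ + En + 1 with hK
  have hKpos : 0 < K := by
    have : 0 ≤ ‖w‖ / c₁ := by positivity
    rw [hK]; linarith
  -- little-o estimate from differentiability
  have hderiv := hasFDerivAt_eval p l0
  rw [hasFDerivAt_iff_isLittleO_nhds_zero] at hderiv
  rw [Asymptotics.isLittleO_iff] at hderiv
  have hccoef : (0:ℝ) < |c₀| / (2 * K) := by positivity
  have hev := hderiv hccoef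
  rw [Metric.eventually_nhds_iff] at hev
  obtain ⟨dc, hdcpos, hdc⟩ := hev
  -- choose parameters
  set ε' : ℝ := min 1 (dc / (2 * (En + 1))) with hε'
  have hε'pos : 0 < ε' := lt_min one_pos (by positivity)
  have hε'le1 : ε' ≤ 1 := min_le_left _ _
  have hε'le : ε' ≤ dc / (2 * (En + 1)) := min_le_right _ _
  set tbar : ℝ := ε' * δ / ((m : ℝ) * ‖w‖ + 1) with htbar
  have htbarpos : 0 < tbar := by
    have : (0:ℝ) < (m : ℝ) * ‖w‖ + 1 := by positivity
    rw [htbar]; positivity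
  set t : ℝ := min tbar (min 1 (dc / (2 * (‖w‖ + 1)))) with ht
  have htpos : 0 < t := lt_min htbarpos (lt_min one_pos (by positivity))
  have htle1 : t ≤ 1 := le_trans (min_le_right _ _) (min_le_left _ _)
  have htletbar : t ≤ tbar := min_le_left _ _
  have htledc : t ≤ dc / (2 * (‖w‖ + 1)) := le_trans (min_le_right _ _) (min_le_right _ _)
  -- the set of parameters s for which the combination lies in D
  set f : ℝ → (Fin m → ℝ) := fun s => (1 - s) • (l0 - t • w) + s • e with hf
  set St : Set ℝ := {s ∈ Set.Icc (0:ℝ) 1 | f s ∈ D} with hSt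
  have h1St : (1:ℝ) ∈ St := by
    constructor
    · exact ⟨zero_le_one, le_refl 1⟩
    · show f 1 ∈ D
      have : f 1 = e := by rw [hf]; simp
      rw [this]; exact heD
  have hfcont : Continuous f := by
    rw [hf]
    exact ((continuous_const.sub continuous_id).smul continuous_const).add
      (continuous_id.smul continuous_const)
  have hStclosed : IsClosed St := by
    have : St = Set.Icc (0:ℝ) 1 ∩ f ⁻¹' D := rfl
    rw [this]
    exact isClosed_Icc.inter (hDcl.preimage hfcont)
  have hbdd : BddBelow St := ⟨0, fun s hs => hs.1.1⟩
  set s : ℝ := sInf St with hs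
  have hsmem : s ∈ St := hStclosed.csInf_mem ⟨1, h1St⟩ hbdd
  have hs01 : s ∈ Set.Icc (0:ℝ) 1 := hsmem.1
  set b : Fin m → ℝ := f s with hb
  have hbD : b ∈ D := hsmem.2
  -- dot product computation
  have hdotb : ∀ u : Fin m → ℝ, dot b u
      = (1 - s) * dot l0 u - (1 - s) * t * dot w u + s * dot e u := by
    intro u
    rw [hb, hf]
    simp only []
    rw [dot_add_left, dot_smul_left, dot_smul_left, dot_sub_left, dot_smul_left]
    ring
  -- lower bound on s
  have hineq : 0 ≤ -(1 - s) * t * a + s * β := by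
    have h0 := hbD x hx
    rw [hdotb x, hface] at h0
    rw [← ha, ← hβ] at h0
    linarith
  have hspos : 0 < s := by
    rcases hs01.1.lt_or_eq with h | h
    · exact h
    · exfalso
      rw [← h] at hineq
      have hta := mul_pos htpos hapos
      linarith [hineq, hta]
  have hslb : c₁ * t ≤ s := by
    rw [hc₁]
    exact alg_slb hs01.1 htle1 htpos hapos hβpos hineq
  -- b is on the frontier of D
  have hbnotint : b ∉ interior D := by
    intro hbint
    rw [mem_interior_iff_mem_nhds, Metric.mem_nhds_iff] at hbint
    obtain ⟨r, hrpos, hball⟩ := hbint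
    set A := l0 - t • w with hA
    set η : ℝ := min s (r / (2 * (‖e - A‖ + 1))) with hη
    have hηpos : 0 < η := lt_min hspos (by positivity)
    have hηles : η ≤ s := min_le_left _ _
    have hηle : η ≤ r / (2 * (‖e - A‖ + 1)) := min_le_right _ _
    have hs' : s - η ∈ St := by
      constructor
      · exact ⟨by linarith, by linarith [hs01.2]⟩
      · show f (s - η) ∈ D
        apply hball
        rw [Metric.mem_ball, dist_eq_norm]
        have hdiff : f (s - η) - b = η • (A - e) := by
          rw [hb, hf, hA]
          funext i
          simp only [Pi.add_apply, Pi.smul_apply, Pi.sub_apply, smul_eq_mul]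
          ring
        rw [hdiff, norm_smul, Real.norm_eq_abs, abs_of_pos hηpos, norm_sub_rev]
        calc η * ‖e - A‖ ≤ (r / (2 * (‖e - A‖ + 1))) * ‖e - A‖ := by
              apply mul_le_mul_of_nonneg_right hηle (norm_nonneg _)
          _ < r := alg_ball hrpos (norm_nonneg (e - A))
    have := csInf_le hbdd hs'
    rw [← hs] at this
    linarith
  have hbfr : b ∈ frontier D := ⟨subset_closure hbD, hbnotint⟩
  have hpb : eval b p = 0 := hp b hbfr
  have hpl0 : eval l0 p = 0 := hp l0 hl0
  -- upper bound on s
  have hub : s ≤ ε' := by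
    apply csInf_le hbdd
    constructor
    · exact ⟨hε'pos.le, hε'le1⟩
    · show f ε' ∈ D
      intro y hy
      have hdoty : dot (f ε') y
          = (1 - ε') * dot l0 y - (1 - ε') * t * dot w y + ε' * dot e y := by
        rw [hf]
        simp only []
        rw [dot_add_left, dot_smul_left, dot_smul_left, dot_sub_left, dot_smul_left]
        ring
      rw [hdoty]
      have h1 : 0 ≤ dot l0 y := hl0D y hy
      have h2 : δ * ‖y‖ ≤ dot e y := he y hy
      have h3 : |dot w y| ≤ (m : ℝ) * ‖w‖ * ‖y‖ := abs_dot_le w y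
      have h4 : t * ((m:ℝ) * ‖w‖ + 1) ≤ ε' * δ := by
        rw [htbar] at htletbar
        rw [← le_div_iff₀ (by positivity)]
        exact htletbar
      have h5 := (abs_le.1 h3).2
      exact alg_ub hε'pos hε'le1 htpos h1 h2 h5 h4 (norm_nonneg y)
        (mul_nonneg (Nat.cast_nonneg m) (norm_nonneg w))
  -- norm bound on b - l0
  have hbl0 : b - l0 = (-((1 - s) * t)) • w + s • (e - l0) := by
    rw [hb, hf]
    funext i
    simp only [Pi.add_apply, Pi.smul_apply, Pi.sub_apply, Pi.neg_apply, smul_eq_mul]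
    ring
  have hnormb : ‖b - l0‖ ≤ t * ‖w‖ + s * En := by
    rw [hbl0]
    calc ‖(-((1 - s) * t)) • w + s • (e - l0)‖
        ≤ ‖(-((1 - s) * t)) • w‖ + ‖s • (e - l0)‖ := norm_add_le _ _
      _ = |(1 - s) * t| * ‖w‖ + |s| * En := by
          rw [norm_smul, norm_smul, Real.norm_eq_abs, Real.norm_eq_abs, abs_neg, hEn]
      _ ≤ t * ‖w‖ + s * En := by
          have h1 : |(1 - s) * t| ≤ t := by
            rw [abs_mul, abs_of_nonneg htpos.le, abs_of_nonneg (by linarith [hs01.2] : (0:ℝ) ≤ 1 - s)]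
            have h1s : (1 - s) * t ≤ 1 * t :=
              mul_le_mul_of_nonneg_right (by linarith [hs01.1]) htpos.le
            linarith
          have h2 : |s| = s := abs_of_pos hspos
          have := mul_le_mul_of_nonneg_right h1 (norm_nonneg w)
          rw [h2]
          linarith
  have hdist : dist b l0 < dc := by
    rw [dist_eq_norm]
    have h1 : t * ‖w‖ ≤ dc / 2 := alg_half htledc (norm_nonneg w) hdcpos htpos.le
    have h2 : s * En < dc / 2 :=
      alg_half' (le_trans hub hε'le) hEnn hdcpos hspos.le
    linarith [hnormb]
  -- apply the little-o bound
  have hdist0 : dist (b - l0) (0 : Fin m → ℝ) < dc := by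
    rw [dist_zero_right, ← dist_eq_norm]
    exact hdist
  have happ := hdc hdist0
  simp only [add_sub_cancel] at happ
  rw [hpb, hpl0] at happ
  have hLval : evalD p l0 (b - l0) = s * c₀ := by
    rw [evalD_eq_dot, ← hg, hbl0, dot_add_right, dot_smul_right, dot_smul_right, hgw, hc₀]
    ring
  rw [hLval] at happ
  simp only [zero_sub, sub_zero, norm_neg, Real.norm_eq_abs] at happ
  have hKb : ‖b - l0‖ ≤ s * K := by
    have h1 : t ≤ s / c₁ := by
      rw [le_div_iff₀ hc₁pos]
      rw [mul_comm]
      exact hslb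
    have h2 : t * ‖w‖ ≤ s / c₁ * ‖w‖ := mul_le_mul_of_nonneg_right h1 (norm_nonneg w)
    have h3 : s / c₁ * ‖w‖ = s * (‖w‖ / c₁) := by ring
    rw [hK]
    calc ‖b - l0‖ ≤ t * ‖w‖ + s * En := hnormb
      _ ≤ s * (‖w‖ / c₁) + s * En := by rw [← h3]; linarith
      _ ≤ s * (‖w‖ / c₁ + En + 1) := by
          have : s * (‖w‖ / c₁ + En + 1) = s * (‖w‖ / c₁) + s * En + s := by ring
          linarith [hspos.le, this]
  have hfinal : s * |c₀| ≤ |c₀| / (2 * K) * (s * K) := by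
    calc s * |c₀| = |s * c₀| := by
          rw [abs_mul, abs_of_pos hspos]
      _ ≤ |c₀| / (2 * K) * ‖b - l0‖ := happ
      _ ≤ |c₀| / (2 * K) * (s * K) := by
          exact mul_le_mul_of_nonneg_left hKb
            (div_nonneg (abs_nonneg _) (by linarith [hKpos]))
  have hc₀pos : 0 < |c₀| := abs_pos.2 hc0
  have : |c₀| / (2 * K) * (s * K) = s * |c₀| / 2 := by
    rw [div_mul_eq_mul_div, div_eq_div_iff (by intro h; nlinarith [hKpos] : (2:ℝ) * K ≠ 0) (by norm_num : (2:ℝ) ≠ 0)]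
    ring
  rw [this] at hfinal
  have := mul_pos hspos hc₀pos
  linarith

lemma adjust_e {C : Set (Fin m → ℝ)} {e : Fin m → ℝ} {δ : ℝ} (hδ : 0 < δ)
    (he : ∀ y ∈ C, δ * ‖y‖ ≤ dot e y) {g l0 : Fin m → ℝ} (hg : g ≠ 0) :
    ∃ (e₂ : Fin m → ℝ) (δ₂ : ℝ), 0 < δ₂ ∧ (∀ y ∈ C, δ₂ * ‖y‖ ≤ dot e₂ y) ∧
      dot g (e₂ - l0) ≠ 0 := by
  by_cases h : dot g (e - l0) = 0
  · set ε : ℝ := δ / (((m : ℝ) + 1) * (‖g‖ + 1)) with hε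
    have hεpos : 0 < ε := by rw [hε]; positivity
    refine ⟨e + ε • g, δ - ε * ((m : ℝ) * ‖g‖), ?_, ?_, ?_⟩
    · have hlt : (m : ℝ) * ‖g‖ < ((m : ℝ) + 1) * (‖g‖ + 1) := by
        nlinarith [norm_nonneg g, Nat.cast_nonneg (α := ℝ) m]
      have h1 : ε * ((m:ℝ) * ‖g‖) < ε * (((m:ℝ) + 1) * (‖g‖ + 1)) :=
        mul_lt_mul_of_pos_left hlt hεpos
      have h2 : ε * (((m:ℝ) + 1) * (‖g‖ + 1)) = δ := by
        rw [hε]; field_simp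
      linarith
    · intro y hy
      have h1 := he y hy
      have h2 : |dot g y| ≤ (m : ℝ) * ‖g‖ * ‖y‖ := abs_dot_le g y
      have h3 : dot (e + ε • g) y = dot e y + ε * dot g y := by
        rw [dot_add_left, dot_smul_left]
      rw [h3]
      have h4 := (abs_le.1 h2).1
      have h5 : ε * dot g y ≥ -(ε * ((m:ℝ) * ‖g‖ * ‖y‖)) := by
        have := mul_le_mul_of_nonneg_left (abs_le.1 h2).1 hεpos.le
        nlinarith [mul_le_mul_of_nonneg_left h4 hεpos.le]
      nlinarith [h1, h5]
    · have hd : (e + ε • g) - l0 = (e - l0) + ε • g := by abel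
      rw [hd, dot_add_right, dot_smul_right, h]
      have := dot_self_pos hg
      intro hcon
      nlinarith [hεpos]
  · exact ⟨e, δ, hδ, he, h⟩

end FaceAux


/-- A nonzero regular real point of the algebraic boundary of the dual cone
supports a face of `C` which is an extreme ray. -/
theorem face_of_regular_point_is_extreme_ray {n : ℕ} (C : Set (Fin (n + 1) → ℝ))
    (hsa : IsSemialgebraic C) (hclosed : IsClosed C) (hcone : IsPointedCone C)
    (hint : (interior C).Nonempty)
    (l0 : Fin (n + 1) → ℝ) (hl0 : l0 ∈ frontier (dualCone C)) (hl0ne : l0 ≠ 0)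
    (hreg : ∃ p : MvPolynomial (Fin (n + 1)) ℝ,
      (∀ l ∈ frontier (dualCone C), MvPolynomial.eval l p = 0) ∧ grad p l0 ≠ 0) :
    ∃ x₀ ∈ C, x₀ ≠ 0 ∧
      {x | x ∈ C ∧ dot l0 x = 0} = {y | ∃ t : ℝ, 0 ≤ t ∧ y = t • x₀} ∧
      SpansExtremeRay C x₀ := by
  classical
  open FaceAux in
  obtain ⟨p, hpvan, hgne⟩ := hreg
  have hscale := hcone.2.1
  have hpointed := hcone.2.2
  -- a strictly positive functional on C
  have hintD := interior_dualCone_nonempty hclosed hcone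
  obtain ⟨e, δ, hδ, he⟩ := exists_pos_functional_of_interior hintD
  obtain ⟨e₂, δ₂, hδ₂, he₂, hc0⟩ := adjust_e hδ he (l0 := l0) hgne
  -- the face is nonzero
  obtain ⟨x₀, hx₀C, hx₀ne, hx₀face⟩ := face_nonzero hclosed hscale hl0
  -- every nonzero face element is parallel to the gradient
  have hpar : ∀ x ∈ C, x ≠ 0 → dot l0 x = 0 → ∃ c : ℝ, x = c • grad p l0 := by
    intro x hx hxne hxf
    exact parallel_of_mem_face hδ₂ he₂ hl0 hpvan hx hxne hxf hgne hc0
  obtain ⟨c0, hc0x⟩ := hpar x₀ hx₀C hx₀ne hx₀face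
  have hc0ne : c0 ≠ 0 := by
    intro h0
    apply hx₀ne
    rw [hc0x, h0, zero_smul]
  have hl0D : l0 ∈ dualCone C := by
    have := hl0.1
    rwa [(dualCone_isClosed C).closure_eq] at this
  -- the set equality
  have hseteq : {x | x ∈ C ∧ dot l0 x = 0} = {y | ∃ t : ℝ, 0 ≤ t ∧ y = t • x₀} := by
    ext z
    constructor
    · rintro ⟨hzC, hzf⟩
      by_cases hz0 : z = 0
      · exact ⟨0, le_refl 0, by rw [hz0, zero_smul]⟩
      obtain ⟨cz, hcz⟩ := hpar z hzC hz0 hzf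
      have hczne : cz ≠ 0 := by
        intro h0; apply hz0; rw [hcz, h0, zero_smul]
      set t : ℝ := cz / c0 with htdef
      have hzt : z = t • x₀ := by
        rw [hcz, hc0x, smul_smul, htdef, div_mul_cancel₀ _ hc0ne]
      refine ⟨t, ?_, hzt⟩
      by_contra htneg
      push_neg at htneg
      have hnegz : -z ∈ C := by
        have : (-t) • x₀ ∈ C := hscale x₀ hx₀C (-t) (by linarith)
        have hzeq : -z = (-t) • x₀ := by rw [hzt, neg_smul]
        rwa [hzeq]
      have : z ∈ C ∩ (-C) := ⟨hzC, by rw [Set.mem_neg]; simpa using hnegz⟩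
      rw [hpointed] at this
      exact hz0 this
    · rintro ⟨t, ht, rfl⟩
      refine ⟨hscale x₀ hx₀C t ht, ?_⟩
      rw [dot_smul_right, hx₀face, mul_zero]
  refine ⟨x₀, hx₀C, hx₀ne, hseteq, hx₀ne, hx₀C, ?_⟩
  intro y hy z hz hsum
  have hsum' : dot l0 y + dot l0 z = 0 := by
    rw [← dot_add_right, hsum, hx₀face]
  have hy0 : 0 ≤ dot l0 y := hl0D y hy
  have hz0 : 0 ≤ dot l0 z := hl0D z hz
  have hyf : dot l0 y = 0 := by linarith
  have hzf : dot l0 z = 0 := by linarith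
  constructor
  · have : y ∈ {x | x ∈ C ∧ dot l0 x = 0} := ⟨hy, hyf⟩
    rw [hseteq] at this
    exact this
  · have : z ∈ {x | x ∈ C ∧ dot l0 x = 0} := ⟨hz, hzf⟩
    rw [hseteq] at this
    exact this
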